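/- Let m ∈ ℕ with m ≥ 1 and C₀ > 0. There exists R₁ > 0, depending only on m and C₀, for which the following holds. Let E ⊂ ℝ be a bounded open set, η₁,…,η_m ∈ ℝ, R ≥ R₁, and set 𝓑_R := ⋃_{j=1}^m (η_j − R, η_j + R). Let W : E → ℝ be measurable with 0 ≤ W(y) ≤ Σ_{j=1}^m C₀/|y − η_j|² for all y ∈ E ∖ 𝓑_R. If ψ : ℝ → ℝ is bounded and continuous, ψ ≥ 0 on 𝓑_R ∪ (ℝ ∖ E), and for every y ∈ E ∖ 𝓑_R the principal-value limit defining (−Δ)^{1/2}ψ(y) exists and satisfies (−Δ)^{1/2}ψ(y) − W(y)·ψ(y) ≥ 0, then ψ ≥ 0 on all of ℝ. -/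

import Mathlib

open MeasureTheory Filter Set

/-- The truncated integral appearing in the principal-value definition of the
half-Laplacian: `(1/π) ∫_{|z| ≥ δ} (u(x) - u(x+z))/z² dz`. -/
noncomputable def pvHalfLap (u : ℝ → ℝ) (x δ : ℝ) : ℝ :=
  (1 / Real.pi) * ∫ z in {z : ℝ | δ ≤ |z|}, (u x - u (x + z)) / z ^ 2

/-- `HasHalfLapAt u x L` means that the principal-value limit defining
`(-Δ)^{1/2} u (x)` exists and equals `L`. -/
def HasHalfLapAt (u : ℝ → ℝ) (x L : ℝ) : Prop :=
  Tendsto (fun δ => pvHalfLap u x δ) (nhdsWithin 0 (Ioi 0)) (nhds L)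

lemma integrableOn_one_div_sq {δ : ℝ} (hδ : 0 < δ) :
    IntegrableOn (fun z : ℝ => 1 / z ^ 2) {z : ℝ | δ ≤ |z|} := by
  have hset : {z : ℝ | δ ≤ |z|} = Iic (-δ) ∪ Ici δ := by
    ext z
    simp [le_abs, or_comm, le_neg]
  have hIci : IntegrableOn (fun z : ℝ => 1 / z ^ 2) (Ici δ) := by
    rw [integrableOn_Ici_iff_integrableOn_Ioi]
    refine (integrableOn_Ioi_rpow_of_lt (by norm_num : (-2:ℝ) < -1) hδ).congr_fun
      (fun x hx => ?_) measurableSet_Ioi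
    have hx0 : (0:ℝ) < x := hδ.trans hx
    beta_reduce
    rw [Real.rpow_neg hx0.le, show ((2:ℝ)) = ((2:ℕ):ℝ) by norm_num, Real.rpow_natCast]
    simp [one_div]
  have hIic : IntegrableOn (fun z : ℝ => 1 / z ^ 2) (Iic (-δ)) := by
    rw [← (Measure.measurePreserving_neg (volume : Measure ℝ)).integrableOn_comp_preimage
        (Homeomorph.neg ℝ).measurableEmbedding]
    simpa [Function.comp_def] using hIci
  rw [hset]
  exact hIic.union hIci


set_option maxHeartbeats 1000000 in
/-- Maximum principle for `L = (-Δ)^{1/2} - W` outside large neighbourhoods of the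
points `η_1, …, η_m`. -/
theorem max_principle_outside_balls (m : ℕ) (hm : 1 ≤ m) (C₀ : ℝ) (hC₀ : 0 < C₀) :
    ∃ R₁ > 0, ∀ E : Set ℝ, IsOpen E → Bornology.IsBounded E →
      ∀ (η : Fin m → ℝ) (R : ℝ), R₁ ≤ R →
      ∀ W : ℝ → ℝ, Measurable W →
        (∀ y ∈ E \ ⋃ j, Ioo (η j - R) (η j + R),
          0 ≤ W y ∧ W y ≤ ∑ j : Fin m, C₀ / |y - η j| ^ 2) →
      ∀ ψ : ℝ → ℝ, (∃ M : ℝ, ∀ x, |ψ x| ≤ M) → Continuous ψ →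
        (∀ y ∈ (⋃ j, Ioo (η j - R) (η j + R)) ∪ Eᶜ, 0 ≤ ψ y) →
        (∀ y ∈ E \ ⋃ j, Ioo (η j - R) (η j + R),
          ∃ L : ℝ, HasHalfLapAt ψ y L ∧ 0 ≤ L - W y * ψ y) →
        ∀ y : ℝ, 0 ≤ ψ y := by
  have hπ : (0:ℝ) < Real.pi := Real.pi_pos
  refine ⟨4 * Real.pi * m * C₀ + 1, by positivity, ?_⟩
  intro E hEopen hEbdd η R hR W hWmeas hWbound ψ hMex hψcont hψpos hpde
  obtain ⟨M, hM⟩ := hMex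
  have hR1pos : (0:ℝ) < 4 * Real.pi * m * C₀ + 1 := by positivity
  have hRpos : 0 < R := lt_of_lt_of_le hR1pos hR
  by_contra hcon
  push_neg at hcon
  obtain ⟨y₀, hy₀⟩ := hcon
  have hy₀E : y₀ ∈ E := by
    by_contra h
    exact absurd (hψpos y₀ (Set.mem_union_right _ h)) (not_le.mpr hy₀)
  -- minimum point
  have hcpt : IsCompact (closure E) := hEbdd.isCompact_closure
  obtain ⟨x₀, hx₀cl, hx₀min⟩ :=
    hcpt.exists_isMinOn ⟨y₀, subset_closure hy₀E⟩ hψcont.continuousOn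
  have hx₀y₀ : ψ x₀ ≤ ψ y₀ := hx₀min (subset_closure hy₀E)
  have hx₀neg : ψ x₀ < 0 := lt_of_le_of_lt hx₀y₀ hy₀
  have hmin : ∀ x, ψ x₀ ≤ ψ x := by
    intro x
    by_cases hx : x ∈ closure E
    · exact hx₀min hx
    · have : 0 ≤ ψ x := hψpos x (Set.mem_union_right _ (fun hxE => hx (subset_closure hxE)))
      linarith
  have hx₀E : x₀ ∈ E := by
    by_contra h
    exact absurd (hψpos x₀ (Set.mem_union_right _ h)) (not_le.mpr hx₀neg)
  have hx₀not : x₀ ∉ ⋃ j, Ioo (η j - R) (η j + R) := by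
    intro h
    exact absurd (hψpos x₀ (Set.mem_union_left _ h)) (not_le.mpr hx₀neg)
  obtain ⟨hW0, hWle⟩ := hWbound x₀ ⟨hx₀E, hx₀not⟩
  obtain ⟨L, hL, hLineq⟩ := hpde x₀ ⟨hx₀E, hx₀not⟩
  set a : ℝ := -ψ x₀ with ha_def
  have ha : 0 < a := by simp [ha_def]; linarith
  -- distances
  have hne : Nonempty (Fin m) := ⟨⟨0, hm⟩⟩
  obtain ⟨j, hj⟩ := Finite.exists_min (fun k : Fin m => |x₀ - η k|)
  set d : ℝ := |x₀ - η j| with hd_def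
  have hdist : ∀ k, R ≤ |x₀ - η k| := by
    intro k
    by_contra h
    push_neg at h
    apply hx₀not
    refine Set.mem_iUnion.mpr ⟨k, ?_⟩
    rw [abs_lt] at h
    constructor <;> linarith [h.1, h.2]
  have hdR : R ≤ d := hdist j
  have hd0 : 0 < d := lt_of_lt_of_le hRpos hdR
  -- lower bound on L
  have hWub : W x₀ ≤ m * C₀ / d ^ 2 := by
    calc W x₀ ≤ ∑ k : Fin m, C₀ / |x₀ - η k| ^ 2 := hWle
      _ ≤ ∑ _k : Fin m, C₀ / d ^ 2 := by
          refine Finset.sum_le_sum (fun k _ => ?_)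
          exact div_le_div_of_nonneg_left hC₀.le (by positivity) (by nlinarith [hj k, hd0, hdist k])
      _ = m * C₀ / d ^ 2 := by simp [Finset.sum_const, mul_div_assoc]
  have hLlow : -(m * C₀ / d ^ 2) * a ≤ L := by
    have h1 : W x₀ * ψ x₀ ≤ L := by linarith
    have h2 : -(m * C₀ / d ^ 2) * a ≤ W x₀ * ψ x₀ := by
      have : W x₀ * a ≤ (m * C₀ / d ^ 2) * a := mul_le_mul_of_nonneg_right hWub ha.le
      have hψx : ψ x₀ = -a := by simp [ha_def]
      rw [hψx, mul_neg]
      linarith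
    linarith
  -- upper bound on L : for all δ ∈ (0, R), pvHalfLap ψ x₀ δ ≤ (1/π) * (R * (-a/(4*d^2)))
  have hpv : ∀ δ ∈ Ioo (0:ℝ) R, pvHalfLap ψ x₀ δ ≤ (1/Real.pi) * (R * (-a / (4 * d ^ 2))) := by
    intro δ hδ
    obtain ⟨hδ0, hδR⟩ := hδ
    set A : Set ℝ := {z : ℝ | δ ≤ |z|} with hA_def
    set f : ℝ → ℝ := fun z => (ψ x₀ - ψ (x₀ + z)) / z ^ 2 with hf_def
    -- integrability of f on A
    have hfmeas : Measurable f := by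
      apply Measurable.div
      · exact (measurable_const.sub (hψcont.measurable.comp (measurable_const.add measurable_id)))
      · exact measurable_id.pow_const 2
    have hM0 : 0 ≤ M := le_trans (abs_nonneg _) (hM 0)
    have hAmeas : MeasurableSet A := measurableSet_le measurable_const measurable_id.abs
    have hfint : IntegrableOn f A := by
      have hbnd : IntegrableOn (fun z : ℝ => 2 * M * (1 / z ^ 2)) A :=
        (integrableOn_one_div_sq hδ0).const_mul (2 * M)
      refine Integrable.mono hbnd hfmeas.aestronglyMeasurable ?_
      filter_upwards [ae_restrict_mem hAmeas] with z hz
      have hzδ : δ ≤ |z| := hz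
      have hz2pos : 0 < z ^ 2 := by nlinarith [hδ0, sq_abs z, abs_nonneg z]
      have hnum : |ψ x₀ - ψ (x₀ + z)| ≤ 2 * M :=
        (abs_sub _ _).trans (by linarith [hM x₀, hM (x₀ + z)])
      have habs : ‖f z‖ = |ψ x₀ - ψ (x₀ + z)| / z ^ 2 := by
        rw [hf_def, Real.norm_eq_abs, abs_div, abs_of_nonneg (sq_nonneg z)]
      rw [habs, Real.norm_eq_abs, abs_of_nonneg (by positivity : (0:ℝ) ≤ 2*M*(1/z^2)),
        div_le_iff₀ hz2pos]
      calc |ψ x₀ - ψ (x₀ + z)| ≤ 2 * M := hnum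
        _ = 2 * M * (1 / z ^ 2) * z ^ 2 := by rw [mul_assoc, one_div_mul_cancel hz2pos.ne', mul_one]
    have hfnonpos : ∀ z, f z ≤ 0 := fun z =>
      div_nonpos_of_nonpos_of_nonneg (by linarith [hmin (x₀ + z)]) (sq_nonneg z)
    -- the good interval
    obtain ⟨p, hp⟩ : ∃ p : ℝ, ∀ z ∈ Ioo p (p + R),
        δ ≤ |z| ∧ z ^ 2 ≤ 4 * d ^ 2 ∧ x₀ + z ∈ Ioo (η j - R) (η j + R) := by
      rcases le_or_gt 0 (η j - x₀) with hc | hc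
      · have hcd : η j - x₀ = d := by
          rw [hd_def, abs_of_nonpos (by linarith)]; ring
        refine ⟨η j - x₀, fun z hz => ?_⟩
        obtain ⟨hz1, hz2⟩ := hz
        have hz0 : R < z := by linarith
        refine ⟨?_, ?_, ?_, ?_⟩
        · rw [abs_of_pos (by linarith)]; linarith
        · nlinarith
        · linarith
        · linarith
      · have hcd : η j - x₀ = -d := by
          rw [hd_def, abs_of_pos (by linarith)]; ring
        refine ⟨η j - x₀ - R, fun z hz => ?_⟩
        obtain ⟨hz1, hz2⟩ := hz
        have hz0 : z < -R := by linarith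
        refine ⟨?_, ?_, ?_, ?_⟩
        · rw [abs_of_neg (by linarith)]; linarith
        · nlinarith
        · linarith
        · linarith
    set J : Set ℝ := Ioo p (p + R) with hJ_def
    have hJA : J ⊆ A := fun z hz => (hp z hz).1
    have hJint : IntegrableOn f J := hfint.mono_set hJA
    have hμJ : volume J = ENNReal.ofReal R := by
      rw [hJ_def, Real.volume_Ioo]; congr 1; ring
    -- step 1
    have step1 : ∫ z in A, f z ≤ ∫ z in J, f z := by
      have hneg : ∫ z in J, -f z ≤ ∫ z in A, -f z := by
        refine setIntegral_mono_set hfint.neg ?_ (HasSubset.Subset.eventuallyLE hJA)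
        filter_upwards with z using neg_nonneg.mpr (hfnonpos z)
      rw [integral_neg, integral_neg] at hneg
      linarith
    -- step 2
    have step2 : ∫ z in J, f z ≤ R * (-a / (4 * d ^ 2)) := by
      have hconst : ∫ z in J, (-a / (4 * d ^ 2)) = R * (-a / (4 * d ^ 2)) := by
        rw [setIntegral_const, measureReal_def, hμJ, ENNReal.toReal_ofReal hRpos.le, smul_eq_mul]
      rw [← hconst]
      refine setIntegral_mono_on hJint (integrableOn_const (by rw [hμJ]; exact ENNReal.ofReal_ne_top)) measurableSet_Ioo ?_
      intro z hz
      obtain ⟨hzδ, hzsq, hzball⟩ := hp z hz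
      have hz2pos : 0 < z ^ 2 := by nlinarith [hδ0, sq_abs z, abs_nonneg z]
      have hψz : 0 ≤ ψ (x₀ + z) :=
        hψpos _ (Set.mem_union_left _ (Set.mem_iUnion.mpr ⟨j, hzball⟩))
      have hψx : ψ x₀ = -a := by simp [ha_def]
      have h1 : f z ≤ -a / z ^ 2 := by
        rw [hf_def]
        exact (div_le_div_iff_of_pos_right hz2pos).mpr (by rw [hψx]; linarith)
      have h2 : -a / z ^ 2 ≤ -a / (4 * d ^ 2) := by
        have h3 : a / (4 * d ^ 2) ≤ a / z ^ 2 :=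
          div_le_div_of_nonneg_left ha.le hz2pos hzsq
        calc -a / z ^ 2 = -(a / z ^ 2) := by ring
          _ ≤ -(a / (4 * d ^ 2)) := neg_le_neg h3
          _ = -a / (4 * d ^ 2) := by ring
      exact h1.trans h2
    have hpveq : pvHalfLap ψ x₀ δ = (1 / Real.pi) * ∫ z in A, f z := rfl
    rw [hpveq]
    exact mul_le_mul_of_nonneg_left (step1.trans step2) (by positivity)
  have hLup : L ≤ (1 / Real.pi) * (R * (-a / (4 * d ^ 2))) :=
    le_of_tendsto hL (eventually_of_mem (Ioo_mem_nhdsGT_of_mem ⟨le_refl 0, hRpos⟩) hpv)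
  have heq : (1 / Real.pi) * (R * (-a / (4 * d ^ 2))) = -(R * a / (4 * Real.pi * d ^ 2)) := by
    field_simp
  rw [heq] at hLup
  have hkey : R * a / (4 * Real.pi * d ^ 2) ≤ m * C₀ * a / d ^ 2 := by
    have : -(m * C₀ * a / d ^ 2) ≤ -(R * a / (4 * Real.pi * d ^ 2)) := by
      calc -(m * C₀ * a / d ^ 2) = -(m * C₀ / d ^ 2) * a := by ring
        _ ≤ L := hLlow
        _ ≤ -(R * a / (4 * Real.pi * d ^ 2)) := hLup
    linarith
  rw [div_le_div_iff₀ (by positivity) (by positivity)] at hkey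
  nlinarith [mul_pos ha (pow_pos hd0 2), hπ, hC₀, hd0]
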